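/- Let P be the presented group defined in the context (arising from the 5-point quintic degeneration, Theorem 3.7). Then P is isomorphic to the symmetric group S_5. (Consequently, in the paper's setting, the fundamental group of the Galois cover of a surface with a 5-point quintic degeneration is trivial.) -/

import Mathlib

namespace Stmt11

/-- Generators: `i ↦ g(i+1)` for `i = 0,…,4`. -/
def g (i : Fin 5) : FreeGroup (Fin 5) := FreeGroup.of i

/-- The braid relator `x y x (y x y)⁻¹`, i.e. `<x,y> = e`. -/
def braid (x y : FreeGroup (Fin 5)) : FreeGroup (Fin 5) := x * y * x * (y * x * y)⁻¹

/-- The commutator relator `x y x⁻¹ y⁻¹`, i.e. `[x,y] = e`. -/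
def comm (x y : FreeGroup (Fin 5)) : FreeGroup (Fin 5) := x * y * x⁻¹ * y⁻¹

/-- Relators of the group `P` from Theorem 3.7 (the 5-point quintic degeneration). -/
def rels : Set (FreeGroup (Fin 5)) :=
  { (g 0) ^ 2, (g 1) ^ 2, (g 2) ^ 2, (g 3) ^ 2, (g 4) ^ 2,
    comm (g 0) (g 3), comm (g 0) (g 4), comm (g 1) (g 4), comm (g 2) (g 3),
    comm (g 3) ((g 1) ^ 2 * (g 4) ^ 2),
    braid (g 0) (g 1), braid (g 1) (g 3), braid (g 2) (g 4), braid (g 3) (g 4),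
    (g 1 * g 0 * (g 1)⁻¹) * ((g 2)⁻¹ * (g 3)⁻¹ * g 4 * g 3 * g 2)⁻¹,
    (g 4) ^ 2 * (g 3) ^ 2 * (g 2) ^ 2 * (g 1) ^ 2 * (g 0) ^ 2 }

/-- The presented group `P`. -/
abbrev P := PresentedGroup rels

/-! ### Auxiliary development -/

-- Generators of `P`.
def A : P := PresentedGroup.of 0
def B : P := PresentedGroup.of 1
def E : P := PresentedGroup.of 2
def C : P := PresentedGroup.of 3
def D : P := PresentedGroup.of 4

lemma relP {r : FreeGroup (Fin 5)} (h : r ∈ rels) : PresentedGroup.mk rels r = 1 :=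
  (QuotientGroup.eq_one_iff _).2 (Subgroup.subset_normalClosure h)

-- squares
lemma hAA : A * A = 1 := by
  have := relP (show (g 0) ^ 2 ∈ rels by simp [rels])
  simp only [pow_two, map_mul] at this; exact this
lemma hBB : B * B = 1 := by
  have := relP (show (g 1) ^ 2 ∈ rels by simp [rels])
  simp only [pow_two, map_mul] at this; exact this
lemma hEE : E * E = 1 := by
  have := relP (show (g 2) ^ 2 ∈ rels by simp [rels])
  simp only [pow_two, map_mul] at this; exact this
lemma hCC : C * C = 1 := by
  have := relP (show (g 3) ^ 2 ∈ rels by simp [rels])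
  simp only [pow_two, map_mul] at this; exact this
lemma hDD : D * D = 1 := by
  have := relP (show (g 4) ^ 2 ∈ rels by simp [rels])
  simp only [pow_two, map_mul] at this; exact this

lemma invA : A⁻¹ = A := inv_eq_of_mul_eq_one_right hAA
lemma invB : B⁻¹ = B := inv_eq_of_mul_eq_one_right hBB
lemma invE : E⁻¹ = E := inv_eq_of_mul_eq_one_right hEE
lemma invC : C⁻¹ = C := inv_eq_of_mul_eq_one_right hCC
lemma invD : D⁻¹ = D := inv_eq_of_mul_eq_one_right hDD

-- commutations
lemma hAC : A * C = C * A := by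
  have h0 := relP (show comm (g 0) (g 3) ∈ rels by simp [rels])
  simp only [comm, map_mul, map_inv] at h0
  have t : A * C * A⁻¹ * C⁻¹ = 1 := h0
  rw [show A * C = ((A * C * A⁻¹ * C⁻¹) * C) * A by group, t]; group
lemma hAD : A * D = D * A := by
  have h0 := relP (show comm (g 0) (g 4) ∈ rels by simp [rels])
  simp only [comm, map_mul, map_inv] at h0
  have t : A * D * A⁻¹ * D⁻¹ = 1 := h0
  rw [show A * D = ((A * D * A⁻¹ * D⁻¹) * D) * A by group, t]; group
lemma hBD : B * D = D * B := by
  have h0 := relP (show comm (g 1) (g 4) ∈ rels by simp [rels])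
  simp only [comm, map_mul, map_inv] at h0
  have t : B * D * B⁻¹ * D⁻¹ = 1 := h0
  rw [show B * D = ((B * D * B⁻¹ * D⁻¹) * D) * B by group, t]; group
lemma hEC : E * C = C * E := by
  have h0 := relP (show comm (g 2) (g 3) ∈ rels by simp [rels])
  simp only [comm, map_mul, map_inv] at h0
  have t : E * C * E⁻¹ * C⁻¹ = 1 := h0
  rw [show E * C = ((E * C * E⁻¹ * C⁻¹) * C) * E by group, t]; group

-- braid relations
lemma hABA : A * B * A = B * A * B := by
  have h0 := relP (show braid (g 0) (g 1) ∈ rels by simp [rels])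
  simp only [braid, map_mul, map_inv] at h0
  have t : A * B * A * (B * A * B)⁻¹ = 1 := h0
  rw [show A * B * A = (A * B * A * (B * A * B)⁻¹) * (B * A * B) by group, t]; group
lemma hBCB : B * C * B = C * B * C := by
  have h0 := relP (show braid (g 1) (g 3) ∈ rels by simp [rels])
  simp only [braid, map_mul, map_inv] at h0
  have t : B * C * B * (C * B * C)⁻¹ = 1 := h0
  rw [show B * C * B = (B * C * B * (C * B * C)⁻¹) * (C * B * C) by group, t]; group
lemma hEDE : E * D * E = D * E * D := by
  have h0 := relP (show braid (g 2) (g 4) ∈ rels by simp [rels])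
  simp only [braid, map_mul, map_inv] at h0
  have t : E * D * E * (D * E * D)⁻¹ = 1 := h0
  rw [show E * D * E = (E * D * E * (D * E * D)⁻¹) * (D * E * D) by group, t]; group
lemma hCDC : C * D * C = D * C * D := by
  have h0 := relP (show braid (g 3) (g 4) ∈ rels by simp [rels])
  simp only [braid, map_mul, map_inv] at h0
  have t : C * D * C * (D * C * D)⁻¹ = 1 := h0
  rw [show C * D * C = (C * D * C * (D * C * D)⁻¹) * (D * C * D) by group, t]; group

-- the conjugation relation
lemma hconj : B * A * B = E * (C * (D * (C * E))) := by
  have h0 := relP (show (g 1 * g 0 * (g 1)⁻¹) * ((g 2)⁻¹ * (g 3)⁻¹ * g 4 * g 3 * g 2)⁻¹ ∈ rels by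
    simp [rels])
  simp only [map_mul, map_inv] at h0
  have t : (B * A * B⁻¹) * (E⁻¹ * C⁻¹ * D * C * E)⁻¹ = 1 := h0
  have h2 : B * A * B⁻¹ = E⁻¹ * C⁻¹ * D * C * E := by
    rw [show B * A * B⁻¹ = ((B * A * B⁻¹) * (E⁻¹ * C⁻¹ * D * C * E)⁻¹) *
      (E⁻¹ * C⁻¹ * D * C * E) by group, t]; group
  rw [invB, invE, invC] at h2
  rw [h2]; group

/-! Right-assoc ("with tail") versions of the relations. -/

lemma aa (x : P) : A * (A * x) = x := by rw [← mul_assoc, hAA, one_mul]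
lemma bb (x : P) : B * (B * x) = x := by rw [← mul_assoc, hBB, one_mul]
lemma ee (x : P) : E * (E * x) = x := by rw [← mul_assoc, hEE, one_mul]
lemma cc (x : P) : C * (C * x) = x := by rw [← mul_assoc, hCC, one_mul]
lemma dd (x : P) : D * (D * x) = x := by rw [← mul_assoc, hDD, one_mul]

lemma ac (x : P) : A * (C * x) = C * (A * x) := by rw [← mul_assoc, hAC, mul_assoc]
lemma ad (x : P) : A * (D * x) = D * (A * x) := by rw [← mul_assoc, hAD, mul_assoc]
lemma bd (x : P) : B * (D * x) = D * (B * x) := by rw [← mul_assoc, hBD, mul_assoc]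
lemma ec (x : P) : E * (C * x) = C * (E * x) := by rw [← mul_assoc, hEC, mul_assoc]

lemma aba (x : P) : A * (B * (A * x)) = B * (A * (B * x)) := by
  rw [← mul_assoc, ← mul_assoc, hABA, mul_assoc, mul_assoc]
lemma bcb (x : P) : B * (C * (B * x)) = C * (B * (C * x)) := by
  rw [← mul_assoc, ← mul_assoc, hBCB, mul_assoc, mul_assoc]
lemma ede (x : P) : E * (D * (E * x)) = D * (E * (D * x)) := by
  rw [← mul_assoc, ← mul_assoc, hEDE, mul_assoc, mul_assoc]
lemma cdc (x : P) : C * (D * (C * x)) = D * (C * (D * x)) := by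
  rw [← mul_assoc, ← mul_assoc, hCDC, mul_assoc, mul_assoc]

lemma conj' (x : P) : B * (A * (B * x)) = E * (C * (D * (C * (E * x)))) := by
  rw [← mul_assoc, ← mul_assoc, hconj]
  simp only [mul_assoc]

/-- `E` is a word in the other generators. -/
lemma hE2 (x : P) : E * x = C * (D * (C * (B * (A * (B * (C * (D * (C * x)))))))) := by
  rw [conj' (C * (D * (C * x)))]
  rw [ec, cc, ec, cc, ede, dd, dd, ec, cc]

/-! ### Normal form sets (stabilizer chain) -/

def sP : Fin 2 → P := ![A, 1]
def uP : Fin 3 → P := ![A * B, B, 1]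
def vP : Fin 4 → P := ![A * (B * C), B * C, C, 1]
def wP : Fin 5 → P := ![A * (B * (C * D)), B * (C * D), C * D, D, 1]

def X1 : Set P := {x | ∃ l, x = sP l}
def X2 : Set P := {x | ∃ k y, y ∈ X1 ∧ x = uP k * y}
def X3 : Set P := {x | ∃ j y, y ∈ X2 ∧ x = vP j * y}
def X4 : Set P := {x | ∃ i y, y ∈ X3 ∧ x = wP i * y}

lemma X1A {x : P} (h : x ∈ X1) : A * x ∈ X1 := by
  obtain ⟨l, rfl⟩ := h
  fin_cases l
  · exact ⟨1, by show A * A = 1; exact hAA⟩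
  · exact ⟨0, by show A * 1 = A; rw [mul_one]⟩

lemma X2A {x : P} (h : x ∈ X2) : A * x ∈ X2 := by
  obtain ⟨k, y, hy, rfl⟩ := h
  fin_cases k
  · exact ⟨1, y, hy, by show A * (A * B * y) = B * y; rw [mul_assoc, aa]⟩
  · exact ⟨0, y, hy, by show A * (B * y) = A * B * y; rw [mul_assoc]⟩
  · exact ⟨2, A * y, X1A hy, by show A * (1 * y) = 1 * (A * y); rw [one_mul, one_mul]⟩

lemma X2B {x : P} (h : x ∈ X2) : B * x ∈ X2 := by
  obtain ⟨k, y, hy, rfl⟩ := h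
  fin_cases k
  · exact ⟨0, A * y, X1A hy, by
      show B * (A * B * y) = A * B * (A * y)
      simp only [mul_assoc]
      rw [← aba]⟩
  · exact ⟨2, y, hy, by show B * (B * y) = 1 * y; rw [bb, one_mul]⟩
  · exact ⟨1, y, hy, by show B * (1 * y) = B * y; rw [one_mul]⟩

lemma X3A {x : P} (h : x ∈ X3) : A * x ∈ X3 := by
  obtain ⟨j, y, hy, rfl⟩ := h
  fin_cases j
  · exact ⟨1, y, hy, by
      show A * (A * (B * C) * y) = B * C * y
      rw [mul_assoc, aa]⟩
  · exact ⟨0, y, hy, by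
      show A * (B * C * y) = A * (B * C) * y
      simp only [mul_assoc]⟩
  · exact ⟨2, A * y, X2A hy, by show A * (C * y) = C * (A * y); rw [ac]⟩
  · exact ⟨3, A * y, X2A hy, by show A * (1 * y) = 1 * (A * y); rw [one_mul, one_mul]⟩

lemma X3B {x : P} (h : x ∈ X3) : B * x ∈ X3 := by
  obtain ⟨j, y, hy, rfl⟩ := h
  fin_cases j
  · exact ⟨0, A * y, X2A hy, by
      show B * (A * (B * C) * y) = A * (B * C) * (A * y)
      simp only [mul_assoc]
      rw [← aba, ac]⟩
  · exact ⟨2, y, hy, by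
      show B * (B * C * y) = C * y
      simp only [mul_assoc]
      rw [bb]⟩
  · exact ⟨1, y, hy, by show B * (C * y) = B * C * y; rw [mul_assoc]⟩
  · exact ⟨3, B * y, X2B hy, by show B * (1 * y) = 1 * (B * y); rw [one_mul, one_mul]⟩

lemma X3C {x : P} (h : x ∈ X3) : C * x ∈ X3 := by
  obtain ⟨j, y, hy, rfl⟩ := h
  fin_cases j
  · exact ⟨0, B * y, X2B hy, by
      show C * (A * (B * C) * y) = A * (B * C) * (B * y)
      simp only [mul_assoc]
      rw [← ac, ← bcb]⟩
  · exact ⟨1, B * y, X2B hy, by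
      show C * (B * C * y) = B * C * (B * y)
      simp only [mul_assoc]
      rw [← bcb]⟩
  · exact ⟨3, y, hy, by show C * (C * y) = 1 * y; rw [cc, one_mul]⟩
  · exact ⟨2, y, hy, by show C * (1 * y) = C * y; rw [one_mul]⟩

lemma X4A {x : P} (h : x ∈ X4) : A * x ∈ X4 := by
  obtain ⟨i, y, hy, rfl⟩ := h
  fin_cases i
  · exact ⟨1, y, hy, by
      show A * (A * (B * (C * D)) * y) = B * (C * D) * y
      rw [mul_assoc, aa]⟩
  · exact ⟨0, y, hy, by
      show A * (B * (C * D) * y) = A * (B * (C * D)) * y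
      simp only [mul_assoc]⟩
  · exact ⟨2, A * y, X3A hy, by
      show A * (C * D * y) = C * D * (A * y)
      simp only [mul_assoc]
      rw [ac, ad]⟩
  · exact ⟨3, A * y, X3A hy, by show A * (D * y) = D * (A * y); rw [ad]⟩
  · exact ⟨4, A * y, X3A hy, by show A * (1 * y) = 1 * (A * y); rw [one_mul, one_mul]⟩

lemma X4B {x : P} (h : x ∈ X4) : B * x ∈ X4 := by
  obtain ⟨i, y, hy, rfl⟩ := h
  fin_cases i
  · exact ⟨0, A * y, X3A hy, by
      show B * (A * (B * (C * D)) * y) = A * (B * (C * D)) * (A * y)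
      simp only [mul_assoc]
      rw [← aba, ac, ad]⟩
  · exact ⟨2, y, hy, by
      show B * (B * (C * D) * y) = C * D * y
      simp only [mul_assoc]
      rw [bb]⟩
  · exact ⟨1, y, hy, by
      show B * (C * D * y) = B * (C * D) * y
      simp only [mul_assoc]⟩
  · exact ⟨3, B * y, X3B hy, by show B * (D * y) = D * (B * y); rw [bd]⟩
  · exact ⟨4, B * y, X3B hy, by show B * (1 * y) = 1 * (B * y); rw [one_mul, one_mul]⟩

lemma X4C {x : P} (h : x ∈ X4) : C * x ∈ X4 := by
  obtain ⟨i, y, hy, rfl⟩ := h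
  fin_cases i
  · exact ⟨0, B * y, X3B hy, by
      show C * (A * (B * (C * D)) * y) = A * (B * (C * D)) * (B * y)
      simp only [mul_assoc]
      rw [← ac, ← bcb, bd]⟩
  · exact ⟨1, B * y, X3B hy, by
      show C * (B * (C * D) * y) = B * (C * D) * (B * y)
      simp only [mul_assoc]
      rw [← bcb, bd]⟩
  · exact ⟨3, y, hy, by
      show C * (C * D * y) = D * y
      simp only [mul_assoc]
      rw [cc]⟩
  · exact ⟨2, y, hy, by show C * (D * y) = C * D * y; rw [mul_assoc]⟩
  · exact ⟨4, C * y, X3C hy, by show C * (1 * y) = 1 * (C * y); rw [one_mul, one_mul]⟩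

lemma X4D {x : P} (h : x ∈ X4) : D * x ∈ X4 := by
  obtain ⟨i, y, hy, rfl⟩ := h
  fin_cases i
  · exact ⟨0, C * y, X3C hy, by
      show D * (A * (B * (C * D)) * y) = A * (B * (C * D)) * (C * y)
      simp only [mul_assoc]
      rw [← ad, ← bd, ← cdc]⟩
  · exact ⟨1, C * y, X3C hy, by
      show D * (B * (C * D) * y) = B * (C * D) * (C * y)
      simp only [mul_assoc]
      rw [← bd, ← cdc]⟩
  · exact ⟨2, C * y, X3C hy, by
      show D * (C * D * y) = C * D * (C * y)
      simp only [mul_assoc]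
      rw [← cdc]⟩
  · exact ⟨4, y, hy, by show D * (D * y) = 1 * y; rw [dd, one_mul]⟩
  · exact ⟨3, y, hy, by show D * (1 * y) = D * y; rw [one_mul]⟩

lemma X4E {x : P} (h : x ∈ X4) : E * x ∈ X4 := by
  rw [hE2]
  exact X4C (X4D (X4C (X4B (X4A (X4B (X4C (X4D (X4C h))))))))

lemma one_mem_X4 : (1 : P) ∈ X4 :=
  ⟨4, 1, ⟨3, 1, ⟨2, 1, ⟨1, by show (1 : P) = 1; rfl⟩,
    by show (1 : P) = 1 * 1; rw [one_mul]⟩,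
    by show (1 : P) = 1 * 1; rw [one_mul]⟩,
    by show (1 : P) = 1 * 1; rw [one_mul]⟩

lemma genX4 (i : Fin 5) {y : P} (hy : y ∈ X4) : PresentedGroup.of (rels := rels) i * y ∈ X4 := by
  fin_cases i
  · exact X4A hy
  · exact X4B hy
  · exact X4E hy
  · exact X4C hy
  · exact X4D hy

lemma invgen (i : Fin 5) : (PresentedGroup.of (rels := rels) i)⁻¹ = PresentedGroup.of i := by
  fin_cases i
  · exact invA
  · exact invB
  · exact invE
  · exact invC
  · exact invD

lemma mem_X4 (x : P) : x ∈ X4 := by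
  have key : ∀ z : FreeGroup (Fin 5), ∀ y ∈ X4, PresentedGroup.mk rels z * y ∈ X4 := by
    intro z
    refine FreeGroup.induction_on
      (C := fun z => ∀ y ∈ X4, PresentedGroup.mk rels z * y ∈ X4) z ?_ ?_ ?_ ?_
    · intro y hy; simpa using hy
    · intro i y hy
      exact genX4 i hy
    · intro i _ y hy
      rw [map_inv]
      have : PresentedGroup.mk rels (FreeGroup.of i) = PresentedGroup.of (rels := rels) i := rfl
      rw [this, invgen]
      exact genX4 i hy
    · intro a b ha hb y hy
      rw [map_mul, mul_assoc]
      exact ha _ (hb _ hy)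
  obtain ⟨z, rfl⟩ := PresentedGroup.mk_surjective rels x
  simpa using key z 1 one_mem_X4

/-! ### The homomorphism to `S₅` -/

def tS : Fin 5 → Equiv.Perm (Fin 5) :=
  ![Equiv.swap 0 1, Equiv.swap 1 2, Equiv.swap 0 4, Equiv.swap 2 3, Equiv.swap 3 4]

lemma hlift : ∀ r ∈ rels, FreeGroup.lift tS r = 1 := by
  intro r hr
  simp only [rels, Set.mem_insert_iff, Set.mem_singleton_iff] at hr
  rcases hr with rfl|rfl|rfl|rfl|rfl|rfl|rfl|rfl|rfl|rfl|rfl|rfl|rfl|rfl|rfl|rfl <;>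
    · simp only [braid, comm, g, map_mul, map_inv, map_pow, FreeGroup.lift_apply_of]
      decide

def φ : P →* Equiv.Perm (Fin 5) := PresentedGroup.toGroup hlift

lemma φA : φ A = Equiv.swap 0 1 := PresentedGroup.toGroup.of hlift
lemma φB : φ B = Equiv.swap 1 2 := PresentedGroup.toGroup.of hlift
lemma φC : φ C = Equiv.swap 2 3 := PresentedGroup.toGroup.of hlift
lemma φD : φ D = Equiv.swap 3 4 := PresentedGroup.toGroup.of hlift

def sS : Fin 2 → Equiv.Perm (Fin 5) := ![Equiv.swap 0 1, 1]
def uS : Fin 3 → Equiv.Perm (Fin 5) :=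
  ![Equiv.swap 0 1 * Equiv.swap 1 2, Equiv.swap 1 2, 1]
def vS : Fin 4 → Equiv.Perm (Fin 5) :=
  ![Equiv.swap 0 1 * (Equiv.swap 1 2 * Equiv.swap 2 3), Equiv.swap 1 2 * Equiv.swap 2 3,
    Equiv.swap 2 3, 1]
def wS : Fin 5 → Equiv.Perm (Fin 5) :=
  ![Equiv.swap 0 1 * (Equiv.swap 1 2 * (Equiv.swap 2 3 * Equiv.swap 3 4)),
    Equiv.swap 1 2 * (Equiv.swap 2 3 * Equiv.swap 3 4),
    Equiv.swap 2 3 * Equiv.swap 3 4, Equiv.swap 3 4, 1]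

lemma φs (l : Fin 2) : φ (sP l) = sS l := by
  fin_cases l
  · show φ A = Equiv.swap 0 1; exact φA
  · show φ 1 = 1; exact map_one φ
lemma φu (k : Fin 3) : φ (uP k) = uS k := by
  fin_cases k
  · show φ (A * B) = Equiv.swap 0 1 * Equiv.swap 1 2; rw [map_mul, φA, φB]
  · show φ B = Equiv.swap 1 2; exact φB
  · show φ 1 = 1; exact map_one φ
lemma φv (j : Fin 4) : φ (vP j) = vS j := by
  fin_cases j
  · show φ (A * (B * C)) = Equiv.swap 0 1 * (Equiv.swap 1 2 * Equiv.swap 2 3)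
    rw [map_mul, map_mul, φA, φB, φC]
  · show φ (B * C) = Equiv.swap 1 2 * Equiv.swap 2 3; rw [map_mul, φB, φC]
  · show φ C = Equiv.swap 2 3; exact φC
  · show φ 1 = 1; exact map_one φ
lemma φw (i : Fin 5) : φ (wP i) = wS i := by
  fin_cases i
  · show φ (A * (B * (C * D))) =
      Equiv.swap 0 1 * (Equiv.swap 1 2 * (Equiv.swap 2 3 * Equiv.swap 3 4))
    rw [map_mul, map_mul, map_mul, φA, φB, φC, φD]
  · show φ (B * (C * D)) = Equiv.swap 1 2 * (Equiv.swap 2 3 * Equiv.swap 3 4)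
    rw [map_mul, map_mul, φB, φC, φD]
  · show φ (C * D) = Equiv.swap 2 3 * Equiv.swap 3 4; rw [map_mul, φC, φD]
  · show φ D = Equiv.swap 3 4; exact φD
  · show φ 1 = 1; exact map_one φ

set_option maxRecDepth 100000 in
lemma key_inj : ∀ (i : Fin 5) (j : Fin 4) (k : Fin 3) (l : Fin 2),
    wS i * (vS j * (uS k * sS l)) = 1 → i = 4 ∧ j = 3 ∧ k = 2 ∧ l = 1 := by decide

set_option maxRecDepth 100000 in
set_option maxHeartbeats 1000000 in
lemma key_surj : ∀ σ : Equiv.Perm (Fin 5), ∃ (i : Fin 5) (j : Fin 4) (k : Fin 3) (l : Fin 2),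
    wS i * (vS j * (uS k * sS l)) = σ := by decide

lemma φ_bij : Function.Bijective φ := by
  constructor
  · rw [injective_iff_map_eq_one]
    intro x hx
    obtain ⟨i, y3, hy3, rfl⟩ := mem_X4 x
    obtain ⟨j, y2, hy2, rfl⟩ := hy3
    obtain ⟨k, y1, hy1, rfl⟩ := hy2
    obtain ⟨l, rfl⟩ := hy1
    rw [map_mul, map_mul, map_mul, φw, φv, φu, φs] at hx
    obtain ⟨hi, hj, hk, hl⟩ := key_inj i j k l hx
    subst hi; subst hj; subst hk; subst hl
    show wP 4 * (vP 3 * (uP 2 * sP 1)) = 1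
    show (1 : P) * (1 * (1 * 1)) = 1
    simp
  · intro σ
    obtain ⟨i, j, k, l, h⟩ := key_surj σ
    exact ⟨wP i * (vP j * (uP k * sP l)), by
      rw [map_mul, map_mul, map_mul, φw, φv, φu, φs, h]⟩

/-- Theorem 3.7 (group-theoretic content): `P ≅ S₅`. -/
theorem P_iso_S5 : Nonempty (P ≃* Equiv.Perm (Fin 5)) :=
  ⟨MulEquiv.ofBijective φ φ_bij⟩

end Stmt11
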